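/- Let n = 4k ≥ 12 be an integer divisible by four and let G be a complete edge-colored graph with coloring γ in which no n-cycle is rainbow. Suppose G contains a rainbow (3n−10)-cycle v_0 → v_1 → ⋯ → v_{3n−11} → v_0 with (pairwise distinct) edge colors c_i = γ(v_i, v_{i+1}), all indices taken modulo 3n−10, and suppose that γ(v_i, v_{i+n−1}) ∈ {c_i, c_{i+1}, c_{i+2}} for every i. Then γ(v_i, v_{i+n−7}) ∈ {c_{i+n−7}, c_{i+n−6}, c_{i+n−5}} for every i modulo 3n−10. -/
import Mathlib


/-- A rainbow `m`-cycle in the complete graph on `V` edge-colored by `γ`: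
pairwise distinct vertices `v i` (`i` mod `m`) with pairwise distinct edge colors
`γ (v i) (v (i+1))`. -/
def RainbowCycle {V C : Type*} (γ : V → V → C) (m : ℕ) (v : ZMod m → V) : Prop :=
  Function.Injective v ∧ Function.Injective (fun i : ZMod m => γ (v i) (v (i + 1)))


/-- vertex offsets of the auxiliary `n`-cycle -/
def gfun (n e s : ℕ) : ℕ := if s = 0 then 0 else if s ≤ e + 1 then n - 8 + s else 2 * n - 10 + s

/-- edge-color offsets of the auxiliary `n`-cycle (for edges `1 ≤ s ≤ n-1`) -/
def ffun (n e b s : ℕ) : ℕ := if s ≤ e then n - 8 + s else if s = e + 1 then b else 2 * n - 10 + s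

lemma gfun_lt {n e : ℕ} (hn : 12 ≤ n) (he : e ≤ n - 2) {s : ℕ} (hs : s < n) :
    gfun n e s < 3 * n - 10 := by unfold gfun; split_ifs <;> first | contradiction | omega

lemma gfun_inj {n e : ℕ} (hn : 12 ≤ n) (he : e ≤ n - 2) {s t : ℕ} (hs : s < n) (ht : t < n)
    (h : gfun n e s = gfun n e t) : s = t := by
  unfold gfun at h; split_ifs at h <;> omega

lemma ffun_lt {n e b : ℕ} (hn : 12 ≤ n) (he : e ≤ n - 2) (hb1 : n - 7 + e ≤ b)
    (hb2 : b ≤ n - 5 + e) {s : ℕ} (hs : s < n) : ffun n e b s < 3 * n - 10 := by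
  unfold ffun; split_ifs <;> first | contradiction | omega

lemma ffun_inj {n e b : ℕ} (hn : 12 ≤ n) (he : e ≤ n - 2) (hb1 : n - 7 + e ≤ b)
    (hb2 : b ≤ n - 5 + e) {s t : ℕ} (hs1 : 1 ≤ s) (hs : s < n) (ht1 : 1 ≤ t) (ht : t < n)
    (h : ffun n e b s = ffun n e b t) : s = t := by
  unfold ffun at h; split_ifs at h <;> omega

lemma ffun_bounds {n e b : ℕ} (hn : 12 ≤ n) (he : e ≤ n - 2) (hb1 : n - 7 + e ≤ b)
    (hb2 : b ≤ n - 5 + e) {s : ℕ} (hs1 : 1 ≤ s) (hs : s < n) :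
    (n - 7 ≤ ffun n e b s ∧ ffun n e b s ≤ 3 * n - 11) ∧
      (ffun n e b s ≤ n - 5 + e ∨ 2 * n - 8 + e ≤ ffun n e b s) := by
  unfold ffun; split_ifs <;> first | contradiction | omega

lemma step {V C : Type*} (γ : V → V → C) (m n : ℕ) (hm : m = 3 * n - 10) (hn : 12 ≤ n)
    (hno : ∀ u : ZMod n → V, ¬ RainbowCycle γ n u)
    (v : ZMod m → V) (hv : RainbowCycle γ m v)
    (c : ZMod m → C) (hc : ∀ i, c i = γ (v i) (v (i + 1)))
    (h1 : ∀ i, γ (v i) (v (i + ((n - 1 : ℕ) : ZMod m))) ∈ ({c i, c (i + 1), c (i + 2)} : Set C))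
    (i : ZMod m) (e : ℕ) (he : e ≤ n - 2) :
    ∃ a : ℕ, (n - 7 ≤ a ∧ a ≤ 3 * n - 11) ∧ (a ≤ n - 5 + e ∨ 2 * n - 8 + e ≤ a) ∧
      γ (v i) (v (i + ((n - 7 : ℕ) : ZMod m))) = c (i + (a : ZMod m)) := by
  haveI : NeZero m := ⟨by omega⟩
  haveI : NeZero n := ⟨by omega⟩
  haveI : Fact (1 < n) := ⟨by omega⟩
  -- cast injectivity on ℕ below m
  have hcast : ∀ a b : ℕ, a < m → b < m → ((a : ZMod m) = b) → a = b := by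
    intro a b ha hb h
    have := congrArg ZMod.val h
    rwa [ZMod.val_cast_of_lt ha, ZMod.val_cast_of_lt hb] at this
  have hcinj : Function.Injective c := by
    intro x y h
    apply hv.2
    show γ (v x) (v (x + 1)) = γ (v y) (v (y + 1))
    rw [← hc x, ← hc y]; exact h
  -- `c` at a shifted index
  have hcc : ∀ a : ℕ, c (i + (a : ZMod m)) = γ (v (i + (a : ZMod m))) (v (i + ((a + 1 : ℕ) : ZMod m))) := by
    intro a
    rw [hc]
    congr 1
    push_cast
    ring
  -- the (n-1)-chord used in the auxiliary cycle, via h1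
  obtain ⟨b, hb1, hb2, hbc⟩ :
      ∃ b : ℕ, n - 7 + e ≤ b ∧ b ≤ n - 5 + e ∧
        γ (v (i + ((n - 7 + e : ℕ) : ZMod m))) (v (i + ((2 * n - 8 + e : ℕ) : ZMod m)))
          = c (i + (b : ZMod m)) := by
    have h := h1 (i + ((n - 7 + e : ℕ) : ZMod m))
    have harg : i + ((n - 7 + e : ℕ) : ZMod m) + ((n - 1 : ℕ) : ZMod m)
        = i + ((2 * n - 8 + e : ℕ) : ZMod m) := by
      rw [add_assoc, ← Nat.cast_add]
      congr 2
      omega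
    rw [harg] at h
    have h6 : i + ((n - 7 + e : ℕ) : ZMod m) + 1 = i + ((n - 6 + e : ℕ) : ZMod m) := by
      have : (n - 6 + e : ℕ) = (n - 7 + e) + 1 := by omega
      rw [this]; push_cast; ring
    have h5 : i + ((n - 7 + e : ℕ) : ZMod m) + 2 = i + ((n - 5 + e : ℕ) : ZMod m) := by
      have : (n - 5 + e : ℕ) = (n - 7 + e) + 2 := by omega
      rw [this]; push_cast; ring
    simp only [Set.mem_insert_iff, Set.mem_singleton_iff, h6, h5] at h
    rcases h with h | h | h
    · exact ⟨n - 7 + e, le_refl _, by omega, h⟩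
    · exact ⟨n - 6 + e, by omega, by omega, h⟩
    · exact ⟨n - 5 + e, by omega, by omega, h⟩
  -- the auxiliary n-cycle
  set u : ZMod n → V := fun x => v (i + ((gfun n e x.val : ℕ) : ZMod m)) with hu
  have huinj : Function.Injective u := by
    intro x y hxy
    simp only [hu] at hxy
    have h2 := hv.1 hxy
    have h3 := add_left_cancel h2
    have h4 := hcast _ _ (hm ▸ gfun_lt hn he (ZMod.val_lt x)) (hm ▸ gfun_lt hn he (ZMod.val_lt y)) h3
    exact ZMod.val_injective n (gfun_inj hn he (ZMod.val_lt x) (ZMod.val_lt y) h4)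
  -- edge colors of the auxiliary cycle, for s ≠ 0
  have hedge : ∀ s : ZMod n, s.val ≠ 0 →
      γ (u s) (u (s + 1)) = c (i + ((ffun n e b s.val : ℕ) : ZMod m)) := by
    intro s hs0
    have hsv : s.val < n := ZMod.val_lt s
    have hself : ((s.val : ℕ) : ZMod n) = s := ZMod.natCast_rightInverse s
    by_cases hsn : s.val = n - 1
    · -- last edge: s + 1 = 0
      have h01 : s + 1 = 0 := by
        have h2 : ((n - 1 + 1 : ℕ) : ZMod n) = 0 := by
          rw [show n - 1 + 1 = n from by omega, ZMod.natCast_self]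
        rw [← hself, hsn, ← h2]
        push_cast
        ring
      rw [h01]
      by_cases hce : e = n - 2
      · -- the chord is the last edge
        have hfv : ffun n e b s.val = b := by unfold ffun; split_ifs <;> first | contradiction | omega
        have hgv : gfun n e s.val = n - 7 + e := by unfold gfun; split_ifs <;> first | contradiction | omega
        have hzero : ((2 * n - 8 + e : ℕ) : ZMod m) = ((gfun n e (0 : ZMod n).val : ℕ) : ZMod m) := by
          simp only [ZMod.val_zero]
          have h2 : (2 * n - 8 + e : ℕ) = m := by omega
          have h3 : gfun n e 0 = 0 := by unfold gfun; simp
          rw [h2, h3, ZMod.natCast_self, Nat.cast_zero]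
        rw [hfv, ← hbc]
        simp only [hu, hgv]
        rw [← hzero]
      · -- a regular cycle edge ending at u 0
        have hfv : ffun n e b s.val = 3 * n - 11 := by unfold ffun; split_ifs <;> first | contradiction | omega
        have hgv : gfun n e s.val = 3 * n - 11 := by unfold gfun; split_ifs <;> first | contradiction | omega
        rw [hfv, hcc]
        simp only [hu, hgv, ZMod.val_zero]
        have h2 : ((3 * n - 11 + 1 : ℕ) : ZMod m) = ((gfun n e 0 : ℕ) : ZMod m) := by
          have h3 : (3 * n - 11 + 1 : ℕ) = m := by omega
          have h4 : gfun n e 0 = 0 := by unfold gfun; simp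
          rw [h3, h4, ZMod.natCast_self, Nat.cast_zero]
        rw [h2]
    · -- s + 1 has value s.val + 1
      have hval : (s + 1).val = s.val + 1 := by
        rw [ZMod.val_add_of_lt]
        · rw [ZMod.val_one]
        · rw [ZMod.val_one]; omega
      by_cases hce : s.val = e + 1
      · -- the chord edge
        have hfv : ffun n e b s.val = b := by unfold ffun; split_ifs <;> first | contradiction | omega
        have hgv : gfun n e s.val = n - 7 + e := by unfold gfun; split_ifs <;> first | contradiction | omega
        have hgv2 : gfun n e (s + 1).val = 2 * n - 8 + e := by
          rw [hval]; unfold gfun; split_ifs <;> first | contradiction | omega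
        rw [hfv, ← hbc]
        simp only [hu, hgv, hgv2]
      · -- a regular cycle edge
        have hfg : ffun n e b s.val = gfun n e s.val ∧ gfun n e (s + 1).val = gfun n e s.val + 1 := by
          rw [hval]; unfold ffun gfun; split_ifs <;> first | contradiction | omega
        rw [hfg.1, hcc]
        simp only [hu, hfg.2]
  -- the first edge is the chord of interest
  have hE0 : γ (u 0) (u (0 + 1)) = γ (v i) (v (i + ((n - 7 : ℕ) : ZMod m))) := by
    have h0 : u 0 = v i := by
      simp only [hu, ZMod.val_zero]
      have : gfun n e 0 = 0 := by unfold gfun; simp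
      rw [this, Nat.cast_zero, add_zero]
    have h1' : u (0 + 1) = v (i + ((n - 7 : ℕ) : ZMod m)) := by
      simp only [hu, zero_add, ZMod.val_one]
      have : gfun n e 1 = n - 7 := by unfold gfun; split_ifs <;> first | contradiction | omega
      rw [this]
    rw [h0, h1']
  -- the auxiliary cycle is not rainbow
  have hnE : ¬ Function.Injective (fun s : ZMod n => γ (u s) (u (s + 1))) :=
    fun h => hno u ⟨huinj, h⟩
  obtain ⟨s, s', hEe, hne⟩ := Function.not_injective_iff.mp hnE

  have hvne : s.val ≠ s'.val := fun h => hne (ZMod.val_injective n h)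
  have main : ∀ x y : ZMod n, x.val = 0 → y.val ≠ 0 →
      γ (u x) (u (x + 1)) = γ (u y) (u (y + 1)) →
      ∃ a : ℕ, (n - 7 ≤ a ∧ a ≤ 3 * n - 11) ∧ (a ≤ n - 5 + e ∨ 2 * n - 8 + e ≤ a) ∧
        γ (v i) (v (i + ((n - 7 : ℕ) : ZMod m))) = c (i + (a : ZMod m)) := by
    intro x y hx hy hxy
    have hx0 : x = 0 := (ZMod.val_eq_zero x).mp hx
    rw [hx0, hE0, hedge y hy] at hxy
    obtain ⟨⟨hA, hB⟩, hC⟩ := ffun_bounds hn he hb1 hb2 (by omega : 1 ≤ y.val) (ZMod.val_lt y)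
    exact ⟨ffun n e b y.val, ⟨hA, hB⟩, hC, hxy⟩
  by_cases hs0 : s.val = 0
  · exact main s s' hs0 (fun h => hvne (hs0.trans h.symm)) hEe
  · by_cases hs'0 : s'.val = 0
    · exact main s' s hs'0 hs0 hEe.symm
    · exfalso
      rw [hedge s hs0, hedge s' hs'0] at hEe
      have h2 := add_left_cancel (hcinj hEe)
      have h3 := hcast _ _ (hm ▸ ffun_lt hn he hb1 hb2 (ZMod.val_lt s))
        (hm ▸ ffun_lt hn he hb1 hb2 (ZMod.val_lt s')) h2
      exact hvne (ffun_inj hn he hb1 hb2 (by omega) (ZMod.val_lt s) (by omega) (ZMod.val_lt s') h3)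

/-- If `n = 4k ≥ 12`, no `n`-cycle is rainbow, `v` is a rainbow `(3n-10)`-cycle
with colors `c i = γ (v i) (v (i+1))`, and `γ (v i) (v (i+n-1)) ∈ {c i, c (i+1), c (i+2)}`
for every `i`, then `γ (v i) (v (i+n-7)) ∈ {c (i+n-7), c (i+n-6), c (i+n-5)}` for every `i`. -/
theorem stmt8 {V C : Type*} (γ : V → V → C) (hsymm : ∀ x y, γ x y = γ y x)
    (n k : ℕ) (hk : n = 4 * k) (hn : 12 ≤ n)
    (hno : ∀ u : ZMod n → V, ¬ RainbowCycle γ n u)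
    (v : ZMod (3 * n - 10) → V) (hv : RainbowCycle γ (3 * n - 10) v)
    (c : ZMod (3 * n - 10) → C) (hc : ∀ i, c i = γ (v i) (v (i + 1)))
    (h1 : ∀ i, γ (v i) (v (i + ((n - 1 : ℕ) : ZMod (3 * n - 10)))) ∈
      ({c i, c (i + 1), c (i + 2)} : Set C)) :
    ∀ i, γ (v i) (v (i + ((n - 7 : ℕ) : ZMod (3 * n - 10)))) ∈
      ({c (i + ((n - 7 : ℕ) : ZMod (3 * n - 10))),
        c (i + ((n - 6 : ℕ) : ZMod (3 * n - 10))),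
        c (i + ((n - 5 : ℕ) : ZMod (3 * n - 10)))} : Set C) := by
  intro i
  haveI : NeZero (3 * n - 10) := ⟨by omega⟩
  have hcast : ∀ a b : ℕ, a < 3 * n - 10 → b < 3 * n - 10 →
      ((a : ZMod (3 * n - 10)) = b) → a = b := by
    intro a b ha hb h
    have := congrArg ZMod.val h
    rwa [ZMod.val_cast_of_lt ha, ZMod.val_cast_of_lt hb] at this
  have hcinj : Function.Injective c := by
    intro x y h
    apply hv.2
    show γ (v x) (v (x + 1)) = γ (v y) (v (y + 1))
    rw [← hc x, ← hc y]; exact h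
  obtain ⟨a, ⟨ha1, ha2⟩, ha3, hta⟩ := step γ (3 * n - 10) n rfl hn hno v hv c hc h1 i 0 (by omega)
  -- the same color index must work for every shift e; rule out a ≥ n - 4
  have hsame : ∀ e : ℕ, e ≤ n - 2 → (a ≤ n - 5 + e ∨ 2 * n - 8 + e ≤ a) := by
    intro e he
    obtain ⟨a', ⟨ha1', ha2'⟩, ha3', hta'⟩ := step γ (3 * n - 10) n rfl hn hno v hv c hc h1 i e he
    have h2 := add_left_cancel (hcinj (hta.symm.trans hta'))
    have h3 : a = a' := hcast _ _ (by omega) (by omega) h2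
    omega
  have key : a = n - 7 ∨ a = n - 6 ∨ a = n - 5 := by
    rcases ha3 with h | h
    · omega
    · exfalso
      rcases le_or_gt a (2 * n - 6) with h2 | h2
      · have := hsame (a - (n - 4)) (by omega); omega
      · have := hsame (a - (2 * n - 9)) (by omega); omega
  simp only [Set.mem_insert_iff, Set.mem_singleton_iff]
  rcases key with h | h | h
  · left; rw [hta, h]
  · right; left; rw [hta, h]
  · right; right; rw [hta, h]
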